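/- Let M ∈ R^{d×d} be a symmetric matrix with eigenvalues λ₁, …, λ_d sorted so that |λ₁| ≥ ⋯ ≥ |λ_d|, with corresponding orthonormal eigenvectors u₁, …, u_d. Let μ ≥ 0 and let U = (u_{j+1}, …, u_d) ∈ R^{d×(d−j)} consist of all eigenvectors whose eigenvalues have absolute value ≤ μ. Let v ∈ R^{d} be a unit vector with ‖vᵀ U‖₂ ≤ ε ≤ 1/2, and define M' = (I − vvᵀ) M (I − vvᵀ). Let τ > 0 and let [V₂, V₁, v] ∈ R^{d×d} be an orthogonal matrix whose columns are eigenvectors of M', where the columns of V₁ are eigenvectors of M' whose eigenvalues have absolute value ≤ μ + τ and the columns of V₂ are eigenvectors of M' whose eigenvalues have absolute value > μ + τ. Then there exists a matrix Q with ‖Q‖₂ ≤ 1 such that ‖U − V₁ Q‖₂ ≤ √( 169 ε² ‖M‖₂² / τ² + ε² ). -/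

import Mathlib

open Matrix

/-- the Euclidean norm of a real vector -/
noncomputable def evnorm {ι : Type*} [Fintype ι] (v : ι → ℝ) : ℝ := Real.sqrt (∑ i, v i ^ 2)

/-- the Euclidean dot product of two real vectors -/
def vdot {ι : Type*} [Fintype ι] (u v : ι → ℝ) : ℝ := ∑ i, u i * v i

/-- the spectral norm (ℓ₂ operator norm) of a real matrix -/
noncomputable def specNorm {m n : ℕ} (A : Matrix (Fin m) (Fin n) ℝ) : ℝ :=
  ‖LinearMap.toContinuousLinearMap (Matrix.toEuclideanLin A)‖

namespace EvProjAux

lemma evnorm_eq_norm {n : ℕ} (x : Fin n → ℝ) :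
    evnorm x = ‖(WithLp.equiv 2 (Fin n → ℝ)).symm x‖ := by
  rw [EuclideanSpace.norm_eq]
  simp [evnorm, sq_abs]

lemma evnorm_nonneg {n : ℕ} (x : Fin n → ℝ) : 0 ≤ evnorm x := Real.sqrt_nonneg _

lemma sum_sq_eq_dot {n : ℕ} (x : Fin n → ℝ) : ∑ i, x i ^ 2 = x ⬝ᵥ x := by
  simp [dotProduct, sq]

lemma evnorm_sq {n : ℕ} (x : Fin n → ℝ) : evnorm x ^ 2 = x ⬝ᵥ x := by
  rw [evnorm, Real.sq_sqrt (by positivity), sum_sq_eq_dot]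

lemma eq_of_sq_eq {a b : ℝ} (ha : 0 ≤ a) (hb : 0 ≤ b) (h : a ^ 2 = b ^ 2) : a = b := by
  nlinarith

lemma le_of_sq_le {a b : ℝ} (ha : 0 ≤ a) (hb : 0 ≤ b) (h : a ^ 2 ≤ b ^ 2) : a ≤ b := by
  nlinarith

lemma specNorm_nonneg {m n : ℕ} (A : Matrix (Fin m) (Fin n) ℝ) : 0 ≤ specNorm A :=
  norm_nonneg _

lemma evnorm_mulVec_le {m n : ℕ} (A : Matrix (Fin m) (Fin n) ℝ) (x : Fin n → ℝ) :
    evnorm (A.mulVec x) ≤ specNorm A * evnorm x := by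
  rw [evnorm_eq_norm, evnorm_eq_norm]
  exact (LinearMap.toContinuousLinearMap (Matrix.toEuclideanLin A)).le_opNorm ((WithLp.equiv 2 (Fin n → ℝ)).symm x)

lemma specNorm_le_bound {m n : ℕ} (A : Matrix (Fin m) (Fin n) ℝ) (C : ℝ) (hC : 0 ≤ C)
    (h : ∀ x, evnorm (A.mulVec x) ≤ C * evnorm x) : specNorm A ≤ C := by
  apply ContinuousLinearMap.opNorm_le_bound _ hC
  intro y
  have := h (WithLp.equiv 2 (Fin n → ℝ) y)
  rw [evnorm_eq_norm, evnorm_eq_norm] at this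
  simpa [Matrix.toEuclideanLin_apply] using this

lemma mulVec_dot_self {m n : ℕ} (A : Matrix (Fin m) (Fin n) ℝ) (h : Aᵀ * A = 1)
    (x : Fin n → ℝ) : (A *ᵥ x) ⬝ᵥ (A *ᵥ x) = x ⬝ᵥ x := by
  rw [Matrix.dotProduct_mulVec, ← Matrix.vecMul_transpose, Matrix.vecMul_vecMul, h,
    Matrix.vecMul_one]

lemma evnorm_mulVec_orth {m n : ℕ} (A : Matrix (Fin m) (Fin n) ℝ) (h : Aᵀ * A = 1)
    (x : Fin n → ℝ) : evnorm (A.mulVec x) = evnorm x := by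
  apply eq_of_sq_eq (evnorm_nonneg _) (evnorm_nonneg _)
  rw [evnorm_sq, evnorm_sq, mulVec_dot_self A h]

lemma specNorm_le_one_of_orth {m n : ℕ} (A : Matrix (Fin m) (Fin n) ℝ) (h : Aᵀ * A = 1) :
    specNorm A ≤ 1 := by
  apply specNorm_le_bound _ _ zero_le_one
  intro x
  rw [evnorm_mulVec_orth A h, one_mul]

lemma dot_self_nonneg {n : ℕ} (x : Fin n → ℝ) : 0 ≤ x ⬝ᵥ x := by
  rw [← sum_sq_eq_dot]; positivity

/-- Bessel: multiplication by a matrix with orthonormal columns on the row side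
does not increase the dot-square. -/
lemma bessel_dot {m n : ℕ} (A : Matrix (Fin m) (Fin n) ℝ) (h : Aᵀ * A = 1)
    (z : Fin m → ℝ) : (z ᵥ* A) ⬝ᵥ (z ᵥ* A) ≤ z ⬝ᵥ z := by
  set a := z ᵥ* A with ha
  have key : z ⬝ᵥ (A *ᵥ a) = a ⬝ᵥ a := by rw [Matrix.dotProduct_mulVec]
  have h0 : 0 ≤ (z - A *ᵥ a) ⬝ᵥ (z - A *ᵥ a) := dot_self_nonneg _
  rw [sub_dotProduct, dotProduct_sub, dotProduct_sub,
    mulVec_dot_self A h, dotProduct_comm (A *ᵥ a) z, key] at h0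
  linarith

lemma bessel_evnorm {m n : ℕ} (A : Matrix (Fin m) (Fin n) ℝ) (h : Aᵀ * A = 1)
    (z : Fin m → ℝ) : evnorm (z ᵥ* A) ≤ evnorm z := by
  apply le_of_sq_le (evnorm_nonneg _) (evnorm_nonneg _)
  rw [evnorm_sq, evnorm_sq]
  exact bessel_dot A h z

lemma specNorm_transpose_le_one_of_orth {m n : ℕ} (A : Matrix (Fin m) (Fin n) ℝ)
    (h : Aᵀ * A = 1) : specNorm Aᵀ ≤ 1 := by
  apply specNorm_le_bound _ _ zero_le_one
  intro x
  rw [Matrix.mulVec_transpose, one_mul]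
  exact bessel_evnorm A h x

lemma specNorm_mul_le {m n k : ℕ} (A : Matrix (Fin m) (Fin n) ℝ)
    (B : Matrix (Fin n) (Fin k) ℝ) : specNorm (A * B) ≤ specNorm A * specNorm B := by
  apply specNorm_le_bound _ _ (mul_nonneg (specNorm_nonneg _) (specNorm_nonneg _))
  intro x
  rw [← Matrix.mulVec_mulVec]
  calc evnorm (A *ᵥ (B *ᵥ x)) ≤ specNorm A * evnorm (B *ᵥ x) := evnorm_mulVec_le _ _
    _ ≤ specNorm A * (specNorm B * evnorm x) := by
        exact mul_le_mul_of_nonneg_left (evnorm_mulVec_le _ _) (specNorm_nonneg _)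
    _ = specNorm A * specNorm B * evnorm x := by ring

lemma specNorm_le_frobenius {m n : ℕ} (A : Matrix (Fin m) (Fin n) ℝ) :
    specNorm A ≤ Real.sqrt (∑ k, ∑ c, A k c ^ 2) := by
  apply specNorm_le_bound _ _ (Real.sqrt_nonneg _)
  intro x
  have hmain : (∑ k, (∑ c, A k c * x c) ^ 2) ≤ (∑ k, ∑ c, A k c ^ 2) * ∑ c, x c ^ 2 := by
    rw [Finset.sum_mul]
    exact Finset.sum_le_sum fun k _ => Finset.sum_mul_sq_le_sq_mul_sq _ _ _
  rw [evnorm, evnorm, ← Real.sqrt_mul (by positivity)]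
  apply Real.sqrt_le_sqrt
  simpa [Matrix.mulVec, dotProduct] using hmain

lemma vecMulVec_mulVec' {m n : ℕ} (v : Fin m → ℝ) (w : Fin n → ℝ) (x : Fin n → ℝ) :
    (Matrix.vecMulVec v w) *ᵥ x = (w ⬝ᵥ x) • v := by
  ext i
  simp only [Matrix.mulVec, Matrix.vecMulVec_apply, dotProduct, Pi.smul_apply, smul_eq_mul]
  rw [Finset.sum_mul]
  apply Finset.sum_congr rfl
  intro s _
  ring

lemma vecMul_vecMulVec {m n : ℕ} (x : Fin m → ℝ) (v : Fin m → ℝ) (w : Fin n → ℝ) :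
    x ᵥ* (Matrix.vecMulVec v w) = (x ⬝ᵥ v) • w := by
  ext i
  simp only [Matrix.vecMul, Matrix.vecMulVec_apply, dotProduct, Pi.smul_apply, smul_eq_mul]
  rw [Finset.sum_mul]
  apply Finset.sum_congr rfl
  intro s _
  ring

lemma vecMulVec_mul {m n k : ℕ} (x : Fin m → ℝ) (y : Fin n → ℝ)
    (A : Matrix (Fin n) (Fin k) ℝ) :
    Matrix.vecMulVec x y * A = Matrix.vecMulVec x (y ᵥ* A) := by
  ext i c
  simp only [Matrix.mul_apply, Matrix.vecMulVec_apply, Matrix.vecMul, dotProduct,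
    Finset.mul_sum]
  apply Finset.sum_congr rfl
  intro s _
  ring

lemma vecMulVec_transpose' {m n : ℕ} (v : Fin m → ℝ) (w : Fin n → ℝ) :
    (Matrix.vecMulVec v w)ᵀ = Matrix.vecMulVec w v := by
  ext i j
  simp [Matrix.vecMulVec_apply, mul_comm]

end EvProjAux

open EvProjAux

set_option maxHeartbeats 2000000 in
/-- **eigenvector projection lemma.** If a unit vector `v` has correlation at most
`ε ≤ 1/2` with all eigenvectors of `M` of absolute eigenvalue `≤ μ` (whose matrix is `U`), then
`U` approximately embeds into the span `V₁` of eigenvectors of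
`M' = (I − vvᵀ)M(I − vvᵀ)` of absolute eigenvalue `≤ μ + τ`:
there is `Q` with `‖Q‖₂ ≤ 1` and `‖U − V₁Q‖₂ ≤ √(169 ε² ‖M‖₂²/τ² + ε²)`. -/
theorem eigenvector_projection {d j p q : ℕ} (hj : j ≤ d)
    (M : Matrix (Fin d) (Fin d) ℝ) (hM : M.IsSymm)
    (u : Fin d → Fin d → ℝ) (lam : Fin d → ℝ)
    (horth : ∀ i i', vdot (u i) (u i') = if i = i' then (1 : ℝ) else 0)
    (heig : ∀ i, M.mulVec (u i) = lam i • u i)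
    (hsorted : ∀ i i' : Fin d, i ≤ i' → |lam i'| ≤ |lam i|)
    (μ : ℝ) (hμ : 0 ≤ μ)
    -- `U = (u_{j+1}, …, u_d)` consists of all eigenvectors of absolute eigenvalue `≤ μ`
    (hsplit : ∀ i : Fin d, |lam i| ≤ μ ↔ j ≤ (i : ℕ))
    (U : Matrix (Fin d) (Fin (d - j)) ℝ)
    (hU : U = Matrix.of fun r c => u (Fin.cast (by omega) (Fin.natAdd j c)) r)
    (v : Fin d → ℝ) (hv : evnorm v = 1)
    (ε : ℝ) (hε : ε ≤ 1 / 2) (hcorr : evnorm (Matrix.vecMul v U) ≤ ε)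
    (M' : Matrix (Fin d) (Fin d) ℝ)
    (hM' : M' = (1 - Matrix.vecMulVec v v) * M * (1 - Matrix.vecMulVec v v))
    (τ : ℝ) (hτ : 0 < τ)
    -- `[V₂, V₁, v]` is an orthogonal matrix of eigenvectors of `M'`
    (V₁ : Matrix (Fin d) (Fin q) ℝ) (V₂ : Matrix (Fin d) (Fin p) ℝ)
    (hV₁ : V₁ᵀ * V₁ = 1) (hV₂ : V₂ᵀ * V₂ = 1) (hV₁₂ : V₁ᵀ * V₂ = 0)
    (hV₁v : Matrix.vecMul v V₁ = 0) (hV₂v : Matrix.vecMul v V₂ = 0)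
    (hcomplete : V₁ * V₁ᵀ + V₂ * V₂ᵀ + Matrix.vecMulVec v v = 1)
    (hV₁eig : ∀ c : Fin q, ∃ l : ℝ, |l| ≤ μ + τ ∧ M'.mulVec (V₁ᵀ c) = l • V₁ᵀ c)
    (hV₂eig : ∀ c : Fin p, ∃ l : ℝ, μ + τ < |l| ∧ M'.mulVec (V₂ᵀ c) = l • V₂ᵀ c) :
    ∃ Q : Matrix (Fin q) (Fin (d - j)) ℝ, specNorm Q ≤ 1 ∧
      specNorm (U - V₁ * Q) ≤ Real.sqrt (169 * ε ^ 2 * specNorm M ^ 2 / τ ^ 2 + ε ^ 2) := by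
  have hε0 : 0 ≤ ε := le_trans (evnorm_nonneg _) hcorr
  have hMsymm : Mᵀ = M := hM
  -- basic facts about U
  have hUU : Uᵀ * U = 1 := by
    ext c c'
    rw [Matrix.mul_apply, Matrix.one_apply]
    have h := horth (Fin.cast (by omega) (Fin.natAdd j c)) (Fin.cast (by omega) (Fin.natAdd j c'))
    rw [vdot] at h
    have hsum : ∑ r, Uᵀ c r * U r c' =
        ∑ r, u (Fin.cast (by omega : j + (d - j) = d) (Fin.natAdd j c)) r *
          u (Fin.cast (by omega : j + (d - j) = d) (Fin.natAdd j c')) r := by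
      apply Finset.sum_congr rfl
      intro r _
      rw [hU]
      rfl
    rw [hsum, h]
    have hiff : (Fin.cast (by omega : j + (d - j) = d) (Fin.natAdd j c)) =
        (Fin.cast (by omega : j + (d - j) = d) (Fin.natAdd j c')) ↔ c = c' := by
      simp only [Fin.ext_iff, Fin.coe_cast, Fin.coe_natAdd]
      omega
    by_cases hcc : c = c'
    · simp [hcc]
    · rw [if_neg (fun hh => hcc (hiff.mp hh)), if_neg hcc]
  -- symmetry of M'
  have hM'symm : M'ᵀ = M' := by
    rw [hM']
    simp only [Matrix.transpose_mul, Matrix.transpose_sub, Matrix.transpose_one,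
      vecMulVec_transpose', hMsymm, Matrix.mul_assoc]
  set w : Fin (d - j) → ℝ := v ᵥ* U with hw
  set X : Matrix (Fin p) (Fin (d - j)) ℝ := V₂ᵀ * U with hX
  set a : Fin p → ℝ := (M *ᵥ v) ᵥ* V₂ with haa
  have hvv : v ⬝ᵥ v = 1 := by
    have h := evnorm_sq v
    rw [hv] at h
    linarith
  -- the key entrywise bound
  have key : ∀ (k : Fin p) (c : Fin (d - j)), X k c ^ 2 ≤ a k ^ 2 * w c ^ 2 / τ ^ 2 := by
    intro k c
    obtain ⟨l, hl, hle⟩ := hV₂eig k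
    set i : Fin d := Fin.cast (by omega : j + (d - j) = d) (Fin.natAdd j c) with hi
    set uc : Fin d → ℝ := u i with huc
    have hUc : ∀ r, U r c = uc r := by intro r; rw [hU]; rfl
    have hlam : |lam i| ≤ μ := by
      rw [hsplit i]
      simp [hi, Fin.coe_cast, Fin.coe_natAdd]
    have hXkc : X k c = (V₂ᵀ k) ⬝ᵥ uc := by
      rw [hX, Matrix.mul_apply]
      apply Finset.sum_congr rfl
      intro r _
      rw [hUc]
    have hwc : w c = v ⬝ᵥ uc := by
      have h0 : w c = v ⬝ᵥ fun r => U r c := rfl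
      rw [h0]
      congr 1
      funext r
      rw [hUc]
    have hak : a k = (V₂ᵀ k) ⬝ᵥ (M *ᵥ v) := by
      have h0 : a k = (M *ᵥ v) ⬝ᵥ fun r => V₂ r k := rfl
      rw [h0, dotProduct_comm]
      rfl
    have hv2v : (V₂ᵀ k) ⬝ᵥ v = 0 := by
      have h0 := congrFun hV₂v k
      simp only [Pi.zero_apply] at h0
      rw [dotProduct_comm]
      exact h0
    -- way 1: using eigenvector of M'
    have way1 : (V₂ᵀ k) ⬝ᵥ (M' *ᵥ uc) = l * ((V₂ᵀ k) ⬝ᵥ uc) := by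
      rw [Matrix.dotProduct_mulVec, ← Matrix.mulVec_transpose, hM'symm, hle,
        smul_dotProduct]
      rfl
    -- way 2: expanding M'
    have hPu : (1 - Matrix.vecMulVec v v) *ᵥ uc = uc - (v ⬝ᵥ uc) • v := by
      rw [Matrix.sub_mulVec, Matrix.one_mulVec, vecMulVec_mulVec']
    have hMu : M *ᵥ (uc - (v ⬝ᵥ uc) • v) = lam i • uc - (v ⬝ᵥ uc) • (M *ᵥ v) := by
      rw [Matrix.mulVec_sub, Matrix.mulVec_smul, heig i]
    have hrow : (V₂ᵀ k) ᵥ* (1 - Matrix.vecMulVec v v) = V₂ᵀ k := by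
      rw [Matrix.vecMul_sub, Matrix.vecMul_one, EvProjAux.vecMul_vecMulVec, hv2v, zero_smul, sub_zero]
    have way2 : (V₂ᵀ k) ⬝ᵥ (M' *ᵥ uc) = lam i * ((V₂ᵀ k) ⬝ᵥ uc) - w c * a k := by
      rw [hM', ← Matrix.mulVec_mulVec, ← Matrix.mulVec_mulVec, hPu, hMu,
        Matrix.dotProduct_mulVec, hrow, dotProduct_sub, dotProduct_smul,
        dotProduct_smul, ← hwc, hak]
      simp [smul_eq_mul]
    -- combine
    have heq : (l - lam i) * ((V₂ᵀ k) ⬝ᵥ uc) = -(w c * a k) := by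
      linear_combination way1.symm.trans way2
    have habs : τ ≤ |l - lam i| := by
      have h1 : |l| - |lam i| ≤ |l - lam i| := abs_sub_abs_le_abs_sub l (lam i)
      linarith
    have hsq : τ ^ 2 ≤ (l - lam i) ^ 2 := by
      rw [← sq_abs (l - lam i)]
      exact pow_le_pow_left₀ hτ.le habs 2
    have h3 : ((l - lam i) * ((V₂ᵀ k) ⬝ᵥ uc)) ^ 2 = (w c * a k) ^ 2 := by
      rw [heq]; ring
    rw [hXkc, le_div_iff₀ (by positivity : (0:ℝ) < τ ^ 2)]
    nlinarith [h3, hsq, sq_nonneg ((V₂ᵀ k) ⬝ᵥ uc)]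
  -- Frobenius bound on X
  have hSa : (∑ k, a k ^ 2) ≤ specNorm M ^ 2 := by
    rw [sum_sq_eq_dot]
    calc a ⬝ᵥ a ≤ (M *ᵥ v) ⬝ᵥ (M *ᵥ v) := bessel_dot V₂ hV₂ _
      _ = evnorm (M *ᵥ v) ^ 2 := (evnorm_sq _).symm
      _ ≤ specNorm M ^ 2 := by
          have h1 : evnorm (M *ᵥ v) ≤ specNorm M := by
            have h2 := evnorm_mulVec_le M v
            rw [hv, mul_one] at h2
            exact h2
          exact pow_le_pow_left₀ (evnorm_nonneg _) h1 2
  have hSw : (∑ c, w c ^ 2) ≤ ε ^ 2 := by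
    have h1 : evnorm w ^ 2 ≤ ε ^ 2 := pow_le_pow_left₀ (evnorm_nonneg _) hcorr 2
    rw [evnorm_sq, ← sum_sq_eq_dot] at h1
    exact h1
  have hF : (∑ k, ∑ c, X k c ^ 2) ≤ specNorm M ^ 2 * ε ^ 2 / τ ^ 2 := by
    calc (∑ k, ∑ c, X k c ^ 2) ≤ ∑ k, ∑ c, a k ^ 2 * w c ^ 2 / τ ^ 2 :=
          Finset.sum_le_sum fun k _ => Finset.sum_le_sum fun c _ => key k c
      _ = (∑ k, a k ^ 2) * (∑ c, w c ^ 2) / τ ^ 2 := by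
          rw [Finset.sum_mul, Finset.sum_div]
          apply Finset.sum_congr rfl
          intro k _
          rw [Finset.mul_sum, Finset.sum_div]
      _ ≤ specNorm M ^ 2 * ε ^ 2 / τ ^ 2 := by
          gcongr <;>
            first
              | exact hSa
              | exact hSw
              | positivity
              | exact Finset.sum_nonneg fun c _ => sq_nonneg _
  have hXspec : specNorm X ^ 2 ≤ specNorm M ^ 2 * ε ^ 2 / τ ^ 2 := by
    have h1 : specNorm X ≤ Real.sqrt (∑ k, ∑ c, X k c ^ 2) := specNorm_le_frobenius X
    have h2 : specNorm X ^ 2 ≤ (∑ k, ∑ c, X k c ^ 2) := by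
      have h3 := pow_le_pow_left₀ (specNorm_nonneg _) h1 2
      rwa [Real.sq_sqrt (by positivity)] at h3
    linarith
  -- choose Q
  refine ⟨V₁ᵀ * U, ?_, ?_⟩
  · calc specNorm (V₁ᵀ * U) ≤ specNorm V₁ᵀ * specNorm U := specNorm_mul_le _ _
      _ ≤ 1 * 1 :=
          mul_le_mul (specNorm_transpose_le_one_of_orth V₁ hV₁)
            (specNorm_le_one_of_orth U hUU) (specNorm_nonneg _) zero_le_one
      _ = 1 := one_mul 1
  · -- identity: U - V₁ (V₁ᵀ U) = V₂ X + v wᵀ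
    have hB : U - V₁ * (V₁ᵀ * U) = V₂ * X + Matrix.vecMulVec v w := by
      have h1 : U - V₁ * (V₁ᵀ * U) = (1 - V₁ * V₁ᵀ) * U := by
        rw [Matrix.sub_mul, Matrix.one_mul, Matrix.mul_assoc]
      have h2 : (1 : Matrix (Fin d) (Fin d) ℝ) - V₁ * V₁ᵀ =
          V₂ * V₂ᵀ + Matrix.vecMulVec v v := by
        rw [← hcomplete]; abel
      rw [h1, h2, Matrix.add_mul, Matrix.mul_assoc, EvProjAux.vecMulVec_mul, hX, hw]
    rw [hB]
    -- final spectral norm bound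
    have hS0 : (0:ℝ) ≤ 169 * ε ^ 2 * specNorm M ^ 2 / τ ^ 2 + ε ^ 2 := by positivity
    apply specNorm_le_bound _ _ (Real.sqrt_nonneg _)
    intro x
    have hexp : (V₂ * X + Matrix.vecMulVec v w) *ᵥ x =
        V₂ *ᵥ (X *ᵥ x) + (w ⬝ᵥ x) • v := by
      rw [Matrix.add_mulVec, ← Matrix.mulVec_mulVec, vecMulVec_mulVec']
    have horthdot' : v ⬝ᵥ (V₂ *ᵥ (X *ᵥ x)) = 0 := by
      rw [Matrix.dotProduct_mulVec, hV₂v, zero_dotProduct]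
    have horthdot : (V₂ *ᵥ (X *ᵥ x)) ⬝ᵥ v = 0 := by
      rw [dotProduct_comm]; exact horthdot'
    have e1 : (V₂ *ᵥ (X *ᵥ x)) ⬝ᵥ ((w ⬝ᵥ x) • v) = 0 := by
      rw [dotProduct_smul, horthdot, smul_eq_mul, mul_zero]
    have e2 : ((w ⬝ᵥ x) • v) ⬝ᵥ (V₂ *ᵥ (X *ᵥ x)) = 0 := by
      rw [smul_dotProduct, horthdot', smul_eq_mul, mul_zero]
    have e3 : ((w ⬝ᵥ x) • v) ⬝ᵥ ((w ⬝ᵥ x) • v) = (w ⬝ᵥ x) ^ 2 := by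
      rw [smul_dotProduct, dotProduct_smul, hvv]
      simp [smul_eq_mul]
      ring
    have hBx : evnorm ((V₂ * X + Matrix.vecMulVec v w) *ᵥ x) ^ 2 =
        (X *ᵥ x) ⬝ᵥ (X *ᵥ x) + (w ⬝ᵥ x) ^ 2 := by
      rw [hexp, evnorm_sq, add_dotProduct, dotProduct_add,
        dotProduct_add, mulVec_dot_self V₂ hV₂, e1, e2, e3]
      ring
    have h4 : (X *ᵥ x) ⬝ᵥ (X *ᵥ x) ≤ specNorm M ^ 2 * ε ^ 2 / τ ^ 2 * evnorm x ^ 2 := by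
      have h5 : evnorm (X *ᵥ x) ≤ specNorm X * evnorm x := evnorm_mulVec_le _ _
      have h6 := pow_le_pow_left₀ (evnorm_nonneg _) h5 2
      rw [evnorm_sq] at h6
      calc (X *ᵥ x) ⬝ᵥ (X *ᵥ x) ≤ (specNorm X * evnorm x) ^ 2 := h6
        _ = specNorm X ^ 2 * evnorm x ^ 2 := by ring
        _ ≤ specNorm M ^ 2 * ε ^ 2 / τ ^ 2 * evnorm x ^ 2 :=
            mul_le_mul_of_nonneg_right hXspec (sq_nonneg _)
    have h7 : (w ⬝ᵥ x) ^ 2 ≤ ε ^ 2 * evnorm x ^ 2 := by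
      have h8 : (w ⬝ᵥ x) ^ 2 ≤ (∑ c, w c ^ 2) * ∑ c, x c ^ 2 :=
        Finset.sum_mul_sq_le_sq_mul_sq _ _ _
      have h9 : evnorm x ^ 2 = ∑ c, x c ^ 2 := by rw [evnorm_sq, sum_sq_eq_dot]
      rw [h9]
      calc (w ⬝ᵥ x) ^ 2 ≤ (∑ c, w c ^ 2) * ∑ c, x c ^ 2 := h8
        _ ≤ ε ^ 2 * ∑ c, x c ^ 2 := by
            apply mul_le_mul_of_nonneg_right hSw
            positivity
    have hfinal : evnorm ((V₂ * X + Matrix.vecMulVec v w) *ᵥ x) ^ 2 ≤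
        (169 * ε ^ 2 * specNorm M ^ 2 / τ ^ 2 + ε ^ 2) * evnorm x ^ 2 := by
      rw [hBx]
      have h10 : specNorm M ^ 2 * ε ^ 2 / τ ^ 2 ≤ 169 * ε ^ 2 * specNorm M ^ 2 / τ ^ 2 := by
        apply div_le_div_of_nonneg_right ?_ (by positivity)
        · nlinarith [sq_nonneg (specNorm M * ε), sq_nonneg ε, sq_nonneg (specNorm M)]
      nlinarith [h4, h7, sq_nonneg (evnorm x), mul_le_mul_of_nonneg_right h10 (sq_nonneg (evnorm x))]
    apply le_of_sq_le (evnorm_nonneg _)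
      (mul_nonneg (Real.sqrt_nonneg _) (evnorm_nonneg _))
    calc evnorm ((V₂ * X + Matrix.vecMulVec v w) *ᵥ x) ^ 2 ≤
        (169 * ε ^ 2 * specNorm M ^ 2 / τ ^ 2 + ε ^ 2) * evnorm x ^ 2 := hfinal
      _ = (Real.sqrt (169 * ε ^ 2 * specNorm M ^ 2 / τ ^ 2 + ε ^ 2) * evnorm x) ^ 2 := by
          rw [mul_pow, Real.sq_sqrt hS0]
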